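/- For natural numbers n ≥ k ≥ 1, the 2-adic valuation of the Stirling number of the second kind S(n,k) satisfies ν(S(n,k)) ≥ σ(k) - σ(n) (the minimum zero estimate). -/
import Mathlib


/-- Stirling numbers of the second kind. -/
def stirling2 : ℕ → ℕ → ℕ
  | 0, 0 => 1
  | 0, _ + 1 => 0
  | _ + 1, 0 => 0
  | n + 1, k + 1 => (k + 1) * stirling2 n (k + 1) + stirling2 n k

/-- Sum of base-2 digits. -/
def sigma2 (n : ℕ) : ℕ := (Nat.digits 2 n).sum

/-- The set of powers of 2 appearing in the binary expansion of `n`. -/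
def twoPows (n : ℕ) : Finset ℕ := (Nat.bitIndices n).toFinset.image (2 ^ ·)


lemma sigma2_zero : sigma2 0 = 0 := by simp [sigma2]

lemma sigma2_def' {n : ℕ} (hn : n ≠ 0) : sigma2 n = n % 2 + sigma2 (n / 2) := by
  unfold sigma2
  rw [Nat.digits_def' (by norm_num) (Nat.pos_of_ne_zero hn)]
  simp

lemma sigma2_le : ∀ n, sigma2 n ≤ n := by
  intro n
  induction n using Nat.strong_induction_on with
  | _ n ih =>
    rcases Nat.eq_zero_or_pos n with h | h
    · simp [h, sigma2_zero]
    · rw [sigma2_def' h.ne']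
      have := ih (n / 2) (Nat.div_lt_self h (by norm_num))
      omega

lemma sigma2_pos {n : ℕ} (hn : 1 ≤ n) : 1 ≤ sigma2 n := by
  induction n using Nat.strong_induction_on with
  | _ n ih =>
    rw [sigma2_def' (by omega)]
    rcases Nat.eq_or_lt_of_le hn with h | h
    · simp [← h]
    · have h2 : 1 ≤ n / 2 := by omega
      have := ih (n / 2) (Nat.div_lt_self (by omega) (by norm_num)) h2
      omega

lemma sigma2_two_pow_add : ∀ h a, a < 2 ^ h → sigma2 (2 ^ h + a) = 1 + sigma2 a := by
  intro h
  induction h with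
  | zero => intro a ha; interval_cases a; simp [sigma2, Nat.digits_def' (b := 2) (by norm_num) one_pos]
  | succ h ih =>
    intro a ha
    rw [sigma2_def' (by positivity)]
    have h1 : (2 ^ (h + 1) + a) % 2 = a % 2 := by
      omega
    have h2 : (2 ^ (h + 1) + a) / 2 = 2 ^ h + a / 2 := by
      rw [pow_succ]; omega
    rw [h1, h2, ih (a / 2) (by omega)]
    rcases Nat.eq_zero_or_pos a with h0 | h0
    · simp [h0, sigma2_zero]
    · rw [sigma2_def' h0.ne']; omega

lemma sigma2_two_pow (h : ℕ) : sigma2 (2 ^ h) = 1 := by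
  simpa [sigma2_zero] using sigma2_two_pow_add h 0 (by positivity)

lemma sigma2_two_mul {n : ℕ} (hn : 1 ≤ n) : sigma2 (2 * n) = sigma2 n := by
  rw [sigma2_def' (by omega)]
  simp [Nat.mul_div_cancel_left, Nat.mul_mod_right]

lemma padicValNat_factorial_eq (n : ℕ) : padicValNat 2 (Nat.factorial n) = n - sigma2 n := by
  have := @sub_one_mul_padicValNat_factorial 2 ⟨Nat.prime_two⟩ n
  simpa [sigma2] using this

lemma val_choose_add (a b : ℕ) :
    padicValNat 2 ((a + b).choose a) + (a - sigma2 a) + (b - sigma2 b)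
      = (a + b) - sigma2 (a + b) := by
  have h : (a + b).choose a * Nat.factorial b * Nat.factorial a = Nat.factorial (a + b) := by
    rw [add_comm a b]
    exact Nat.add_choose_mul_factorial_mul_factorial b a
  have hc : 0 < (a + b).choose a := Nat.choose_pos (Nat.le_add_right a b)
  have h2 : padicValNat 2 ((a + b).choose a * Nat.factorial b * Nat.factorial a) = padicValNat 2 (Nat.factorial (a+b)) := by rw [h]
  rw [padicValNat.mul (p := 2) (by positivity) (by positivity),
      padicValNat.mul (p := 2) (by positivity) (by positivity)] at h2
  rw [padicValNat_factorial_eq, padicValNat_factorial_eq, padicValNat_factorial_eq] at h2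
  have la := sigma2_le a
  have lb := sigma2_le b
  have lab := sigma2_le (a + b)
  omega

lemma sigma2_add_le (a b : ℕ) : sigma2 (a + b) ≤ sigma2 a + sigma2 b := by
  have := val_choose_add a b
  have la := sigma2_le a
  have lb := sigma2_le b
  have lab := sigma2_le (a + b)
  omega

lemma pow_dvd_of_le_val {c m : ℕ} (hm : m ≠ 0) (h : c ≤ padicValNat 2 m) : 2 ^ c ∣ m := by
  rw [← Nat.factorization_def m Nat.prime_two] at h
  exact (Nat.Prime.pow_dvd_iff_le_factorization Nat.prime_two hm).2 h

lemma kummer_dvd (a b : ℕ) :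
    2 ^ (sigma2 a + sigma2 b) ∣ 2 ^ (sigma2 (a + b)) * (a + b).choose a := by
  have hc : 0 < (a + b).choose a := Nat.choose_pos (Nat.le_add_right a b)
  apply pow_dvd_of_le_val (by positivity)
  rw [padicValNat.mul (p := 2) (by positivity) (by omega),
      @padicValNat.prime_pow 2 ⟨Nat.prime_two⟩ _]
  have := val_choose_add a b
  have la := sigma2_le a
  have lb := sigma2_le b
  have lab := sigma2_le (a + b)
  omega

lemma stirling2_succ_succ (n k : ℕ) :
    stirling2 (n + 1) (k + 1) = (k + 1) * stirling2 n (k + 1) + stirling2 n k := rfl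

lemma stirling2_succ_zero (n : ℕ) : stirling2 (n + 1) 0 = 0 := rfl

lemma stirling2_zero_succ (k : ℕ) : stirling2 0 (k + 1) = 0 := rfl

lemma stirling2_eq_zero_of_lt : ∀ n k, n < k → stirling2 n k = 0 := by
  intro n
  induction n with
  | zero => intro k hk; match k, hk with | k + 1, _ => rfl
  | succ n ih =>
    intro k hk
    match k, hk with
    | k + 1, hk =>
      rw [stirling2_succ_succ, ih (k + 1) (by omega), ih k (by omega), mul_zero]

lemma stirling2_pos : ∀ n k, 1 ≤ k → k ≤ n → 0 < stirling2 n k := by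
  intro n
  induction n with
  | zero => intro k h1 h2; omega
  | succ n ih =>
    intro k h1 h2
    match k, h1 with
    | k + 1, _ =>
      rw [stirling2_succ_succ]
      rcases Nat.eq_zero_or_pos k with hk | hk
      · subst hk
        rcases Nat.eq_zero_or_pos n with hn | hn
        · subst hn; simp [stirling2]
        · have := ih 1 le_rfl hn
          simp only [Nat.zero_add]
          omega
      · have := ih k hk (by omega)
        omega

/-- auxiliary inner sum -/
def Tsum (b m i : ℕ) : ℕ :=
  ∑ j ∈ Finset.range (b + 1), Nat.choose b j * stirling2 j m * i ^ (b - j)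

lemma Tsum_zero (m i : ℕ) : Tsum 0 m i = stirling2 0 m := by
  simp [Tsum]

lemma Tsum_succ (b m i : ℕ) :
    Tsum (b + 1) m i
      = i * Tsum b m i
        + ∑ j ∈ Finset.range (b + 1), Nat.choose b j * stirling2 (j + 1) m * i ^ (b - j) := by
  unfold Tsum
  rw [Finset.sum_range_succ' _ (b + 1)]
  have hsplit : ∀ j ∈ Finset.range (b + 1),
      Nat.choose (b + 1) (j + 1) * stirling2 (j + 1) m * i ^ (b + 1 - (j + 1))
        = Nat.choose b (j + 1) * stirling2 (j + 1) m * i ^ (b - j)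
          + Nat.choose b j * stirling2 (j + 1) m * i ^ (b - j) := by
    intro j hj
    rw [Nat.choose_succ_succ, Nat.succ_sub_succ]
    ring
  rw [Finset.sum_congr rfl hsplit, Finset.sum_add_distrib]
  have hmul : i * ∑ j ∈ Finset.range (b + 1), Nat.choose b j * stirling2 j m * i ^ (b - j)
      = (∑ j ∈ Finset.range b,
          Nat.choose b (j + 1) * stirling2 (j + 1) m * i ^ (b - (j + 1) + 1))
        + Nat.choose b 0 * stirling2 0 m * i ^ (b + 1) := by
    rw [Finset.mul_sum, Finset.sum_range_succ' _ b]
    congr 1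
    · apply Finset.sum_congr rfl
      intro j hj
      rw [pow_succ]; ring
    · rw [Nat.sub_zero, pow_succ]; ring
  have hdrop : ∑ j ∈ Finset.range (b + 1),
      Nat.choose b (j + 1) * stirling2 (j + 1) m * i ^ (b - j)
      = ∑ j ∈ Finset.range b,
          Nat.choose b (j + 1) * stirling2 (j + 1) m * i ^ (b - (j + 1) + 1) := by
    rw [Finset.sum_range_succ, Nat.choose_succ_self, zero_mul, zero_mul, add_zero]
    apply Finset.sum_congr rfl
    intro j hj
    have := Finset.mem_range.mp hj
    congr 2
    omega
  rw [hmul, hdrop]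
  simp [Nat.choose_zero_right]
  ring

lemma Tsum_succ_zero (b i : ℕ) : Tsum (b + 1) 0 i = i * Tsum b 0 i := by
  rw [Tsum_succ]
  have : ∀ j ∈ Finset.range (b + 1),
      Nat.choose b j * stirling2 (j + 1) 0 * i ^ (b - j) = 0 := by
    intro j hj; rw [stirling2_succ_zero]; ring
  rw [Finset.sum_eq_zero this, add_zero]

lemma Tsum_succ_succ (b m i : ℕ) :
    Tsum (b + 1) (m + 1) i = (i + (m + 1)) * Tsum b (m + 1) i + Tsum b m i := by
  rw [Tsum_succ]
  have : ∀ j ∈ Finset.range (b + 1),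
      Nat.choose b j * stirling2 (j + 1) (m + 1) * i ^ (b - j)
        = (m + 1) * (Nat.choose b j * stirling2 j (m + 1) * i ^ (b - j))
          + Nat.choose b j * stirling2 j m * i ^ (b - j) := by
    intro j hj
    rw [stirling2_succ_succ]
    ring
  rw [Finset.sum_congr rfl this, Finset.sum_add_distrib, ← Finset.mul_sum]
  unfold Tsum
  ring

lemma stirling2_add (a b : ℕ) : ∀ k,
    stirling2 (a + b) k = ∑ i ∈ Finset.range (k + 1), stirling2 a i * Tsum b (k - i) i := by
  induction b with
  | zero =>
    intro k
    rw [Nat.add_zero, Finset.sum_range_succ]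
    have h0 : ∀ i ∈ Finset.range k, stirling2 a i * Tsum 0 (k - i) i = 0 := by
      intro i hi
      have hik := Finset.mem_range.mp hi
      have : k - i = (k - i - 1) + 1 := by omega
      rw [Tsum_zero, this, stirling2_zero_succ, mul_zero]
    rw [Finset.sum_eq_zero h0, Tsum_zero, Nat.sub_self]
    simp [stirling2]
  | succ b ih =>
    intro k
    have hn : a + (b + 1) = (a + b) + 1 := by omega
    rw [hn]
    cases k with
    | zero =>
      rw [stirling2_succ_zero]
      rw [Finset.sum_range_one, Tsum_succ_zero]
      simp
    | succ k =>
      rw [stirling2_succ_succ, ih (k + 1), ih k]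
      conv_rhs => rw [Finset.sum_range_succ]
      have hterm : ∀ i ∈ Finset.range (k + 1),
          stirling2 a i * Tsum (b + 1) (k + 1 - i) i
            = (k + 1) * (stirling2 a i * Tsum b (k + 1 - i) i)
              + stirling2 a i * Tsum b (k - i) i := by
        intro i hi
        have hik := Finset.mem_range.mp hi
        have h1 : k + 1 - i = (k - i) + 1 := by omega
        rw [h1, Tsum_succ_succ]
        have h2 : i + (k - i + 1) = k + 1 := by omega
        rw [h2, ← h1]
        ring
      rw [Finset.sum_congr rfl hterm, Finset.sum_add_distrib]
      have hlast : stirling2 a (k + 1) * Tsum (b + 1) (k + 1 - (k + 1)) (k + 1)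
          = (k + 1) * (stirling2 a (k + 1) * Tsum b (k + 1 - (k + 1)) (k + 1)) := by
        rw [Nat.sub_self, Tsum_succ_zero]
        ring
      rw [hlast, Finset.sum_range_succ _ (k + 1), mul_add, Finset.mul_sum]
      ring

lemma stirling2_zero_of_pos : ∀ {a : ℕ}, 1 ≤ a → stirling2 a 0 = 0 := by
  intro a ha
  match a, ha with
  | a + 1, _ => rfl

lemma le_val_of_pow_dvd {c m : ℕ} (hm : m ≠ 0) (h : 2 ^ c ∣ m) : c ≤ padicValNat 2 m := by
  rw [← Nat.factorization_def m Nat.prime_two]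
  exact (Nat.Prime.pow_dvd_iff_le_factorization Nat.prime_two hm).1 h

lemma term_dvd {n : ℕ}
    (IH : ∀ m, m < n → ∀ k, 1 ≤ k → k ≤ m → 2 ^ sigma2 k ∣ 2 ^ sigma2 m * stirling2 m k)
    {a b k i j : ℕ} (ha : 1 ≤ a) (han : a < n) (hbn : b < n)
    (hk : 1 ≤ k) (hik : i ≤ k) (hjb : j ≤ b) :
    2 ^ (sigma2 k + sigma2 (b - j)) ∣
      2 ^ (sigma2 a + sigma2 b) * (stirling2 a i * (Nat.choose b j * stirling2 j (k - i) * i ^ (b - j))) := by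
  by_cases h1 : stirling2 a i = 0
  · simp [h1]
  by_cases h2 : stirling2 j (k - i) = 0
  · simp [h2]
  have hia : i ≤ a := by
    by_contra hia
    exact h1 (stirling2_eq_zero_of_lt a i (by omega))
  have hi1 : 1 ≤ i := by
    rcases Nat.eq_zero_or_pos i with h | h
    · exfalso; apply h1; rw [h]; exact stirling2_zero_of_pos ha
    · exact h
  rcases eq_or_lt_of_le hik with hik' | hik'
  · -- i = k
    subst hik'
    rw [Nat.sub_self] at h2 ⊢
    have hj0 : j = 0 := by
      rcases Nat.eq_zero_or_pos j with h | h
      · exact h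
      · exfalso; apply h2
        match j, h with
        | j + 1, _ => rfl
    subst hj0
    rw [Nat.sub_zero]
    have hIH : 2 ^ sigma2 i ∣ 2 ^ sigma2 a * stirling2 a i := IH a han i hi1 hia
    calc 2 ^ (sigma2 i + sigma2 b) = 2 ^ sigma2 i * 2 ^ sigma2 b := by rw [pow_add]
      _ ∣ (2 ^ sigma2 a * stirling2 a i) * 2 ^ sigma2 b := mul_dvd_mul_right hIH _
      _ ∣ 2 ^ (sigma2 a + sigma2 b) * (stirling2 a i * (Nat.choose b 0 * stirling2 0 0 * i ^ b)) := by
          rw [pow_add]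
          refine Dvd.intro (i ^ b) ?_
          simp [stirling2]
          ring
  · -- i < k
    have hki1 : 1 ≤ k - i := by omega
    have hkij : k - i ≤ j := by
      by_contra hc
      exact h2 (stirling2_eq_zero_of_lt j (k - i) (by omega))
    have hj1 : 1 ≤ j := by omega
    have hjn : j < n := by omega
    have d1 : sigma2 i ≤ sigma2 a + padicValNat 2 (stirling2 a i) := by
      have := IH a han i hi1 hia
      have h := le_val_of_pow_dvd (by positivity) this
      rwa [padicValNat.mul (p := 2) (by positivity) h1,
        @padicValNat.prime_pow 2 ⟨Nat.prime_two⟩ _] at h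
    have d2 : sigma2 (k - i) ≤ sigma2 j + padicValNat 2 (stirling2 j (k - i)) := by
      have := IH j hjn (k - i) hki1 hkij
      have h := le_val_of_pow_dvd (by positivity) this
      rwa [padicValNat.mul (p := 2) (by positivity) h2,
        @padicValNat.prime_pow 2 ⟨Nat.prime_two⟩ _] at h
    have hcne : Nat.choose b j ≠ 0 := (Nat.choose_pos hjb).ne'
    have d3 : sigma2 j + sigma2 (b - j) ≤ sigma2 b + padicValNat 2 (Nat.choose b j) := by
      have hkd := kummer_dvd j (b - j)
      rw [Nat.add_sub_cancel' hjb] at hkd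
      have h := le_val_of_pow_dvd (by positivity) hkd
      rwa [padicValNat.mul (p := 2) (by positivity) hcne,
        @padicValNat.prime_pow 2 ⟨Nat.prime_two⟩ _] at h
    have d4 : sigma2 k ≤ sigma2 i + sigma2 (k - i) := by
      have := sigma2_add_le i (k - i)
      rwa [Nat.add_sub_cancel' hik] at this
    have hX : stirling2 a i ≠ 0 := h1
    have hZ : stirling2 j (k - i) ≠ 0 := h2
    have hW : i ^ (b - j) ≠ 0 := by positivity
    have hYZ : Nat.choose b j * stirling2 j (k - i) ≠ 0 := by positivity
    have hYZW : Nat.choose b j * stirling2 j (k - i) * i ^ (b - j) ≠ 0 := by positivity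
    have hXYZW : stirling2 a i * (Nat.choose b j * stirling2 j (k - i) * i ^ (b - j)) ≠ 0 := by
      positivity
    apply pow_dvd_of_le_val (by positivity)
    rw [padicValNat.mul (p := 2) (by positivity) hXYZW,
      @padicValNat.prime_pow 2 ⟨Nat.prime_two⟩ _,
      padicValNat.mul (p := 2) hX hYZW,
      padicValNat.mul (p := 2) hYZ hW,
      padicValNat.mul (p := 2) hcne hZ]
    omega

lemma cancel_two {x y : ℕ} (h : 2 * x ∣ 2 * y) : x ∣ y :=
  (mul_dvd_mul_iff_left (two_ne_zero)).1 h

lemma main_dvd : ∀ n k : ℕ, 1 ≤ k → k ≤ n → 2 ^ sigma2 k ∣ 2 ^ sigma2 n * stirling2 n k := by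
  intro n
  induction n using Nat.strong_induction_on with
  | _ n IH =>
    intro k hk hkn
    have hn1 : 1 ≤ n := le_trans hk hkn
    rcases eq_or_lt_of_le hn1 with h1 | h1
    · have hk1 : k = 1 := by omega
      subst hk1; rw [← h1]
      exact dvd_mul_right _ _
    · set h := Nat.log 2 n with hh
      have hpow_le : 2 ^ h ≤ n := Nat.pow_log_le_self 2 (by omega)
      have hlt : n < 2 ^ (h + 1) := Nat.lt_pow_succ_log_self (by norm_num) n
      rw [pow_succ] at hlt
      set a := n - 2 ^ h with hadef
      have hab : n = a + 2 ^ h := by omega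
      have hab2 : a < 2 ^ h := by omega
      rcases Nat.eq_zero_or_pos a with ha0 | ha0
      · -- doubling case : n = 2 ^ h with h ≥ 1
        have hn2h : n = 2 ^ h := by omega
        have hhpos : 1 ≤ h := by
          rcases Nat.eq_zero_or_pos h with h0 | h0
          · exfalso; rw [h0] at hn2h; norm_num at hn2h; omega
          · exact h0
        set c := 2 ^ (h - 1) with hcdef
        have hcc : n = c + c := by
          have : h = (h - 1) + 1 := by omega
          rw [hn2h, this, pow_succ]; omega
        have hc1 : 1 ≤ c := Nat.one_le_two_pow
        have hcn : c < n := by omega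
        have hσn : sigma2 n = 1 := by rw [hn2h]; exact sigma2_two_pow h
        have hσc : sigma2 c = 1 := sigma2_two_pow (h - 1)
        rw [hσn, pow_one]
        rw [hcc, stirling2_add]
        -- split Tsum at j = c
        have hTsplit : ∀ i, stirling2 c i * Tsum c (k - i) i
            = (∑ j ∈ Finset.range c,
                stirling2 c i * (Nat.choose c j * stirling2 j (k - i) * i ^ (c - j)))
              + stirling2 c i * stirling2 c (k - i) := by
          intro i
          rw [Tsum, Finset.sum_range_succ, Nat.choose_self, Nat.sub_self, one_mul, pow_zero,
            mul_one, mul_add, Finset.mul_sum]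
        rw [Finset.sum_congr rfl fun i _ => hTsplit i, Finset.sum_add_distrib, mul_add]
        apply dvd_add
        · -- part 1 : terms with j < c
          rw [Finset.mul_sum]
          apply Finset.dvd_sum
          intro i hi
          rw [Finset.mul_sum]
          apply Finset.dvd_sum
          intro j hj
          have hjc : j < c := Finset.mem_range.mp hj
          have hik : i ≤ k := by have := Finset.mem_range.mp hi; omega
          have htd := term_dvd IH hc1 hcn hcn hk hik (le_of_lt hjc)
          rw [hσc] at htd
          have hσcj : 1 ≤ sigma2 (c - j) := sigma2_pos (by omega)
          have h2 : 2 ^ (sigma2 k + 1) ∣ 2 ^ (1 + 1) *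
              (stirling2 c i * (Nat.choose c j * stirling2 j (k - i) * i ^ (c - j))) :=
            dvd_trans (pow_dvd_pow 2 (by omega)) htd
          apply cancel_two
          calc 2 * 2 ^ sigma2 k = 2 ^ (sigma2 k + 1) := by ring
            _ ∣ 2 ^ (1 + 1) * _ := h2
            _ = 2 * (2 * _) := by ring
        · -- part 2 : the symmetric sum
          have hApart : ∀ i ∈ (Finset.range (k + 1)).filter (fun i => 2 * i < k),
              2 ^ sigma2 k ∣ 4 * (stirling2 c i * stirling2 c (k - i)) := by
            intro i hi
            obtain ⟨hi1, hi2⟩ := Finset.mem_filter.mp hi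
            have hik : i ≤ k := by have := Finset.mem_range.mp hi1; omega
            by_cases z1 : stirling2 c i = 0
            · rw [z1]; simp
            by_cases z2 : stirling2 c (k - i) = 0
            · rw [z2]; simp
            have hi0 : 1 ≤ i := by
              rcases Nat.eq_zero_or_pos i with h0 | h0
              · exfalso; apply z1; rw [h0]; exact stirling2_zero_of_pos hc1
              · exact h0
            have hic : i ≤ c := by
              by_contra hc'
              exact z1 (stirling2_eq_zero_of_lt c i (by omega))
            have hkic : k - i ≤ c := by
              by_contra hc'
              exact z2 (stirling2_eq_zero_of_lt c (k - i) (by omega))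
            have d1 := IH c hcn i hi0 hic
            have d2 := IH c hcn (k - i) (by omega) hkic
            rw [hσc, pow_one] at d1 d2
            have d3 : 2 ^ (sigma2 i + sigma2 (k - i)) ∣
                4 * (stirling2 c i * stirling2 c (k - i)) := by
              have := mul_dvd_mul d1 d2
              rw [pow_add]
              calc 2 ^ sigma2 i * 2 ^ sigma2 (k - i)
                  ∣ (2 * stirling2 c i) * (2 * stirling2 c (k - i)) := this
                _ = 4 * (stirling2 c i * stirling2 c (k - i)) := by ring
            refine dvd_trans (pow_dvd_pow 2 ?_) d3
            have := sigma2_add_le i (k - i)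
            rw [Nat.add_sub_cancel' hik] at this
            exact this
          have hMpart : ∀ i ∈ (Finset.range (k + 1)).filter (fun i => 2 * i = k),
              2 ^ sigma2 k ∣ 2 * (stirling2 c i * stirling2 c (k - i)) := by
            intro i hi
            obtain ⟨hi1, hi2⟩ := Finset.mem_filter.mp hi
            have hki : k - i = i := by omega
            rw [hki]
            have hi0 : 1 ≤ i := by omega
            by_cases z1 : stirling2 c i = 0
            · rw [z1]; simp
            have hic : i ≤ c := by
              by_contra hc'
              exact z1 (stirling2_eq_zero_of_lt c i (by omega))
            have d1 := IH c hcn i hi0 hic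
            rw [hσc, pow_one] at d1
            have hσk : sigma2 k = sigma2 i := by
              rw [show k = 2 * i by omega]
              exact sigma2_two_mul hi0
            rw [hσk]
            exact dvd_trans d1 ⟨stirling2 c i, by ring⟩
          set s := Finset.range (k + 1) with hs
          set g := fun i => stirling2 c i * stirling2 c (k - i) with hg
          have e1 : ∑ i ∈ s, g i
              = (∑ i ∈ s.filter (fun i => 2 * i < k), g i)
                + (∑ i ∈ s.filter (fun i => ¬ 2 * i < k), g i) :=
            (Finset.sum_filter_add_sum_filter_not s _ g).symm
          have e2 : ∑ i ∈ s.filter (fun i => ¬ 2 * i < k), g i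
              = (∑ i ∈ s.filter (fun i => 2 * i = k), g i)
                + (∑ i ∈ s.filter (fun i => k < 2 * i), g i) := by
            rw [← Finset.sum_filter_add_sum_filter_not (s.filter (fun i => ¬ 2 * i < k))
              (fun i => 2 * i = k) g, Finset.filter_filter, Finset.filter_filter]
            congr 1
            · congr 1
              apply Finset.filter_congr
              intro i _
              constructor
              · intro ⟨_, h⟩; exact h
              · intro h; exact ⟨by omega, h⟩
            · congr 1
              apply Finset.filter_congr
              intro i _
              constructor
              · intro ⟨h1, h2⟩; omega
              · intro h; exact ⟨by omega, by omega⟩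
          have e3 : ∑ i ∈ s.filter (fun i => k < 2 * i), g i
              = ∑ i ∈ s.filter (fun i => 2 * i < k), g i := by
            apply Finset.sum_nbij' (fun i => k - i) (fun i => k - i)
            · intro i hi
              obtain ⟨h1, h2⟩ := Finset.mem_filter.mp hi
              have := Finset.mem_range.mp h1
              refine Finset.mem_filter.mpr ⟨Finset.mem_range.mpr (by omega), by omega⟩
            · intro i hi
              obtain ⟨h1, h2⟩ := Finset.mem_filter.mp hi
              have := Finset.mem_range.mp h1
              refine Finset.mem_filter.mpr ⟨Finset.mem_range.mpr (by omega), by omega⟩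
            · intro i hi
              obtain ⟨h1, h2⟩ := Finset.mem_filter.mp hi
              have := Finset.mem_range.mp h1
              omega
            · intro i hi
              obtain ⟨h1, h2⟩ := Finset.mem_filter.mp hi
              have := Finset.mem_range.mp h1
              omega
            · intro i hi
              obtain ⟨h1, h2⟩ := Finset.mem_filter.mp hi
              have hik := Finset.mem_range.mp h1
              simp only [hg]
              rw [show k - (k - i) = i by omega]
              ring
          rw [e1, e2, e3]
          have hfin : 2 * ((∑ i ∈ s.filter (fun i => 2 * i < k), g i)
              + ((∑ i ∈ s.filter (fun i => 2 * i = k), g i)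
                + (∑ i ∈ s.filter (fun i => 2 * i < k), g i)))
              = (∑ i ∈ s.filter (fun i => 2 * i < k), 4 * g i)
                + (∑ i ∈ s.filter (fun i => 2 * i = k), 2 * g i) := by
            rw [← Finset.mul_sum, ← Finset.mul_sum]
            ring
          rw [hfin]
          exact dvd_add (Finset.dvd_sum hApart) (Finset.dvd_sum hMpart)
      · -- general case : n = a + 2 ^ h with 1 ≤ a < 2 ^ h
        have hσn : sigma2 n = 1 + sigma2 a := by
          rw [hab, add_comm a (2 ^ h)]
          exact sigma2_two_pow_add h a hab2
        have hσs : sigma2 n = sigma2 a + sigma2 (2 ^ h) := by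
          rw [sigma2_two_pow, hσn]; omega
        have han : a < n := by
          have : 1 ≤ 2 ^ h := Nat.one_le_two_pow
          omega
        have hbn : 2 ^ h < n := by omega
        rw [hab] at hσs ⊢
        rw [stirling2_add, hσs, Finset.mul_sum]
        apply Finset.dvd_sum
        intro i hi
        have hik : i ≤ k := by have := Finset.mem_range.mp hi; omega
        rw [Tsum, Finset.mul_sum, Finset.mul_sum]
        apply Finset.dvd_sum
        intro j hj
        have hjb : j ≤ 2 ^ h := by have := Finset.mem_range.mp hj; omega
        have htd := term_dvd IH ha0 han hbn hk hik hjb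
        exact dvd_trans (pow_dvd_pow 2 (Nat.le_add_right _ _)) htd

theorem stmt_5 (n k : ℕ) (hk : 1 ≤ k) (hkn : k ≤ n) :
    (padicValNat 2 (stirling2 n k) : ℤ) ≥ (sigma2 k : ℤ) - sigma2 n := by
  have hpos : 0 < stirling2 n k := stirling2_pos n k hk hkn
  have hd := main_dvd n k hk hkn
  have hv := le_val_of_pow_dvd (by positivity) hd
  rw [padicValNat.mul (p := 2) (by positivity) hpos.ne',
    @padicValNat.prime_pow 2 ⟨Nat.prime_two⟩ _] at hv
  omega
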